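/- Let n ≥ 1, ℓ > 0, c > 0, and let F = diag(f₁, …, fₙ) with fᵢ > 0. Define T₀ = blockdiag(−√(c/ℓ)·√(F^{−1}), √(c/ℓ)·√(J_{n+1}), √(J_{n+1})) ∈ ℝ^{(3n+2)×(3n+2)} (where square roots of diagonal positive definite matrices are entrywise) and M = √F·Σ·J_{−1}·√(J_{n+1}^{−1}) ∈ ℝ^{n×(n+1)}. Then T₀·A₀·T₀^{−1} = ω₀·[[0_{(2n+1)×(2n+1)}, Q],[−Qᵀ, 0_{(n+1)×(n+1)}]], where Q ∈ ℝ^{(2n+1)×(n+1)} is the vertical stack of M over I_{n+1}. In particular T₀·A₀·T₀^{−1} is skew-symmetric, and consequently every complex eigenvalue of A₀ has zero real part. -/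

import Mathlib

open Matrix Polynomial

noncomputable section

/-- The `n × n` tridiagonal matrix `B` of the Marx generator. -/
def marxB (n : ℕ) : Matrix (Fin n) (Fin n) ℝ :=
  Matrix.of fun i j =>
    if i = j then (if (i : ℕ) = n - 1 then ((n : ℝ) + 1) / n else 2)
    else if (i : ℕ) + 1 = (j : ℕ) ∨ (j : ℕ) + 1 = (i : ℕ) then -1 else 0

/-- The `n × (n+1)` difference matrix `Σ`. -/
def marxSigma (n : ℕ) : Matrix (Fin n) (Fin (n + 1)) ℝ :=
  Matrix.of fun i j =>
    if (j : ℕ) = (i : ℕ) then 1 else if (j : ℕ) = (i : ℕ) + 1 then -1 else 0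

/-- `J_{n+1} = diag(1, …, 1, n)`. -/
def marxJ (n : ℕ) : Matrix (Fin (n + 1)) (Fin (n + 1)) ℝ :=
  Matrix.diagonal fun j => if (j : ℕ) = n then (n : ℝ) else 1

/-- `J_{-1} = diag(1, …, 1, -1)` of size `n+1`. -/
def marxJm (n : ℕ) : Matrix (Fin (n + 1)) (Fin (n + 1)) ℝ :=
  Matrix.diagonal fun j => if (j : ℕ) = n then (-1 : ℝ) else 1

/-- The `(3n+2) × (3n+2)` state transition matrix `A₀` of the Marx circuit,
indexed by `(Fin n ⊕ Fin (n+1)) ⊕ Fin (n+1)`, the `2n+1` voltages followed by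
the `n+1` currents. -/
def marxA0 (n : ℕ) (ℓ c : ℝ) (f : Fin n → ℝ) :
    Matrix ((Fin n ⊕ Fin (n + 1)) ⊕ Fin (n + 1))
      ((Fin n ⊕ Fin (n + 1)) ⊕ Fin (n + 1)) ℝ :=
  Matrix.fromBlocks 0
    (Matrix.fromRows (-(1 / c) • (Matrix.diagonal f * marxSigma n * marxJm n))
      ((1 / c) • (1 : Matrix (Fin (n + 1)) (Fin (n + 1)) ℝ)))
    (Matrix.fromCols ((1 / ℓ) • ((marxJ n)⁻¹ * marxJm n * (marxSigma n)ᵀ))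
      (-(1 / ℓ) • (1 : Matrix (Fin (n + 1)) (Fin (n + 1)) ℝ)))
    0


lemma eval_charpoly_eq_det' {m : Type*} [Fintype m] [DecidableEq m] {R : Type*} [CommRing R]
    (A : Matrix m m R) (t : R) :
    A.charpoly.eval t = (Matrix.diagonal (fun _ => t) - A).det := by
  rw [Matrix.charpoly, ← Polynomial.coe_evalRingHom, RingHom.map_det]
  congr 1
  ext i j
  by_cases h : i = j
  · subst h
    simp [Matrix.charmatrix_apply_eq]
  · simp [Matrix.charmatrix_apply_ne _ _ _ h, Matrix.diagonal_apply_ne _ h]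

lemma charpoly_conj' {m : Type*} [Fintype m] [DecidableEq m] {R : Type*} [CommRing R]
    (P A B : Matrix m m R) (h1 : P * B = 1) (h2 : B * P = 1) :
    (P * A * B).charpoly = A.charpoly := by
  have hmapmul : ∀ (X Y : Matrix m m R), (X * Y).map (C : R →+* R[X]) = X.map C * Y.map C :=
    fun X Y => Matrix.map_mul
  have hc : Matrix.charmatrix (P * A * B) = P.map C * Matrix.charmatrix A * B.map C := by
    rw [Matrix.charmatrix, Matrix.charmatrix, mul_sub, sub_mul]
    congr 1
    · rw [← (Matrix.scalar_commute (X : R[X]) (fun r' => Commute.all _ _) (P.map C)).eq,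
        mul_assoc, ← hmapmul, h1, Matrix.map_one _ (map_zero C) (map_one C), mul_one]
    · simp only [RingHom.mapMatrix_apply]
      rw [← hmapmul, ← hmapmul]
  rw [Matrix.charpoly, Matrix.charpoly, hc, Matrix.det_mul, Matrix.det_mul, mul_comm,
    ← mul_assoc, ← Matrix.det_mul, ← hmapmul, h2]
  simp [Matrix.map_one]

open scoped ComplexOrder in
lemma skew_root_re_eq_zero' {m : Type*} [Fintype m] [DecidableEq m]
    (S : Matrix m m ℝ) (hskew : Sᵀ = -S) (μ : ℂ)
    (hroot : (S.charpoly.map (algebraMap ℝ ℂ)).IsRoot μ) : μ.re = 0 := by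
  set φ := algebraMap ℝ ℂ
  set Sc := S.map φ with hSc
  have hchar : Sc.charpoly = S.charpoly.map φ := Matrix.charpoly_map S φ
  have hdet0 : (Matrix.diagonal (fun _ => μ) - Sc).det = 0 := by
    rw [← eval_charpoly_eq_det', hchar]
    exact hroot
  obtain ⟨v, hv0, hv⟩ := Matrix.exists_mulVec_eq_zero_iff.mpr hdet0
  have heig : Sc *ᵥ v = μ • v := by
    rw [Matrix.sub_mulVec] at hv
    have hdiag : Matrix.diagonal (fun _ => μ) *ᵥ v = μ • v := by
      ext k; simp [Matrix.mulVec_diagonal]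
    rw [hdiag] at hv
    exact (sub_eq_zero.mp hv).symm
  have hScskew : Scᴴ = -Sc := by
    ext x y
    have h := congrFun (congrFun hskew x) y
    simp only [Matrix.transpose_apply, Matrix.neg_apply] at h
    simp only [Matrix.conjTranspose_apply, Matrix.map_apply, Matrix.neg_apply, hSc, φ,
      Complex.coe_algebraMap, Complex.star_def, Complex.conj_ofReal]
    rw [h]
    push_cast
    ring
  have hne : (star v) ⬝ᵥ v ≠ 0 := fun h => hv0 (dotProduct_star_self_eq_zero.mp h)
  have e1 : star v ⬝ᵥ (Sc *ᵥ v) = μ * (star v ⬝ᵥ v) := by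
    rw [heig, dotProduct_smul, smul_eq_mul]
  have e2 : star (star v ⬝ᵥ (Sc *ᵥ v)) = star μ * (star v ⬝ᵥ v) := by
    rw [e1, star_mul']
    congr 1
    exact (Matrix.star_dotProduct v v).symm
  have e3 : star (star v ⬝ᵥ (Sc *ᵥ v)) = -(μ * (star v ⬝ᵥ v)) := by
    rw [← Matrix.star_dotProduct, Matrix.star_mulVec, ← Matrix.dotProduct_mulVec, hScskew,
      Matrix.neg_mulVec, dotProduct_neg, e1]
  have key : star μ = -μ := by
    have h : star μ * (star v ⬝ᵥ v) = (-μ) * (star v ⬝ᵥ v) := by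
      rw [← e2, e3]; ring
    exact mul_right_cancel₀ hne h
  have h := congrArg Complex.re key
  simp only [Complex.star_def, Complex.conj_re, Complex.neg_re] at h
  linarith

/-- with
`T₀ = blockdiag(−√(c/ℓ)·√(F⁻¹), √(c/ℓ)·√(J_{n+1}), √(J_{n+1}))` and
`M = √F·Σ·J_{−1}·√(J_{n+1}⁻¹)`, one has
`T₀·A₀·T₀⁻¹ = ω₀·[[0, Q],[−Qᵀ, 0]]` where `Q` stacks `M` over `I_{n+1}`;
in particular `T₀·A₀·T₀⁻¹` is skew-symmetric and every complex eigenvalue of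
`A₀` has zero real part. -/
theorem statement14 (n : ℕ) (hn : 1 ≤ n) (ℓ c : ℝ) (hℓ : 0 < ℓ) (hc : 0 < c)
    (f : Fin n → ℝ) (hf : ∀ i, 0 < f i)
    (ω₀ : ℝ) (hω₀ : ω₀ = 1 / Real.sqrt (ℓ * c))
    (T₀ : Matrix ((Fin n ⊕ Fin (n + 1)) ⊕ Fin (n + 1))
      ((Fin n ⊕ Fin (n + 1)) ⊕ Fin (n + 1)) ℝ)
    (hT₀ : T₀ = Matrix.fromBlocks
      (Matrix.fromBlocks
        (Matrix.diagonal fun i => -(Real.sqrt (c / ℓ) * Real.sqrt ((f i)⁻¹))) 0 0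
        (Matrix.diagonal fun j : Fin (n + 1) =>
          Real.sqrt (c / ℓ) * Real.sqrt (if (j : ℕ) = n then (n : ℝ) else 1)))
      0 0
      (Matrix.diagonal fun j : Fin (n + 1) => Real.sqrt (if (j : ℕ) = n then (n : ℝ) else 1)))
    (M : Matrix (Fin n) (Fin (n + 1)) ℝ)
    (hM : M = Matrix.diagonal (fun i => Real.sqrt (f i)) * marxSigma n * marxJm n *
      Matrix.diagonal (fun j : Fin (n + 1) => Real.sqrt ((if (j : ℕ) = n then (n : ℝ) else 1)⁻¹))) :
    T₀ * marxA0 n ℓ c f * T₀⁻¹ =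
      ω₀ • Matrix.fromBlocks 0
        (Matrix.fromRows M (1 : Matrix (Fin (n + 1)) (Fin (n + 1)) ℝ))
        (-(Matrix.fromRows M (1 : Matrix (Fin (n + 1)) (Fin (n + 1)) ℝ))ᵀ) 0 ∧
    (T₀ * marxA0 n ℓ c f * T₀⁻¹)ᵀ = -(T₀ * marxA0 n ℓ c f * T₀⁻¹) ∧
    (∀ μ : ℂ, ((marxA0 n ℓ c f).charpoly.map (algebraMap ℝ ℂ)).IsRoot μ →
      μ.re = 0) := by
  obtain ⟨sl, hsl, rfl⟩ : ∃ b : ℝ, 0 < b ∧ ℓ = b ^ 2 :=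
    ⟨Real.sqrt ℓ, Real.sqrt_pos.mpr hℓ, (Real.sq_sqrt hℓ.le).symm⟩
  obtain ⟨sc, hsc, rfl⟩ : ∃ b : ℝ, 0 < b ∧ c = b ^ 2 :=
    ⟨Real.sqrt c, Real.sqrt_pos.mpr hc, (Real.sq_sqrt hc.le).symm⟩
  obtain ⟨a, ha, rfl⟩ : ∃ b : Fin n → ℝ, (∀ i, 0 < b i) ∧ f = fun i => b i ^ 2 :=
    ⟨fun i => Real.sqrt (f i), fun i => Real.sqrt_pos.mpr (hf i),
      funext fun i => (Real.sq_sqrt (hf i).le).symm⟩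
  have hn0 : (0:ℝ) < n := by exact_mod_cast hn
  have hsl0 : sl ≠ 0 := hsl.ne'
  have hsc0 : sc ≠ 0 := hsc.ne'
  have hq : Real.sqrt (sc ^ 2 / sl ^ 2) = sc / sl := by
    rw [← div_pow, Real.sqrt_sq (by positivity)]
  have hw : ω₀ = 1 / (sl * sc) := by
    rw [hω₀, ← mul_pow, Real.sqrt_sq (by positivity)]
  have hsa : ∀ i, Real.sqrt (a i ^ 2) = a i := fun i => Real.sqrt_sq (ha i).le
  have hsai : ∀ i, Real.sqrt ((a i ^ 2)⁻¹) = (a i)⁻¹ := fun i => by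
    rw [Real.sqrt_inv, hsa i]
  set g : Fin (n+1) → ℝ := fun j => if (j : ℕ) = n then (n : ℝ) else 1 with hgdef
  have hgj : ∀ j : Fin (n+1), (if (j : ℕ) = n then (n : ℝ) else 1) = g j := fun _ => rfl
  have hgpos : ∀ j, 0 < g j := fun j => by
    by_cases h : (j : ℕ) = n <;> simp [hgdef, h, hn0]
  set d : ((Fin n ⊕ Fin (n+1)) ⊕ Fin (n+1)) → ℝ :=
    Sum.elim (Sum.elim (fun i => -(Real.sqrt (sc^2/sl^2) * Real.sqrt ((a i ^ 2)⁻¹)))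
      (fun j => Real.sqrt (sc^2/sl^2) * Real.sqrt (g j))) (fun j => Real.sqrt (g j)) with hddef
  have hTd : T₀ = Matrix.diagonal d := by
    rw [hT₀, Matrix.fromBlocks_diagonal, Matrix.fromBlocks_diagonal]
  have hdne : ∀ x, d x ≠ 0 := by
    rintro ((i | j) | j)
    · have h1 : (0:ℝ) < Real.sqrt (sc^2/sl^2) * Real.sqrt ((a i ^ 2)⁻¹) := by
        rw [hq, hsai]
        have := ha i
        positivity
      simp only [hddef, Sum.elim_inl]
      exact neg_ne_zero.mpr h1.ne'
    · simp only [hddef, Sum.elim_inl, Sum.elim_inr, hq]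
      have := hgpos j
      have h2 : 0 < Real.sqrt (g j) := Real.sqrt_pos.mpr this
      positivity
    · simp only [hddef, Sum.elim_inr]
      exact (Real.sqrt_pos.mpr (hgpos j)).ne'
  have hdet : IsUnit T₀.det := by
    rw [hTd, Matrix.det_diagonal]
    exact isUnit_iff_ne_zero.mpr (Finset.prod_ne_zero_iff.mpr fun x _ => hdne x)
  have hTinv1 : T₀ * T₀⁻¹ = 1 := Matrix.mul_nonsing_inv _ hdet
  have hTinv2 : T₀⁻¹ * T₀ = 1 := Matrix.nonsing_inv_mul _ hdet
  have hJinv : (marxJ n)⁻¹ = Matrix.diagonal (fun j => (g j)⁻¹) := by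
    apply Matrix.inv_eq_right_inv
    rw [show marxJ n = Matrix.diagonal g from rfl, Matrix.diagonal_mul_diagonal,
      show (fun j => g j * (g j)⁻¹) = fun _ : Fin (n+1) => (1:ℝ) from
        funext fun j => mul_inv_cancel₀ (hgpos j).ne', Matrix.diagonal_one]
  set Q := Matrix.fromRows M (1 : Matrix (Fin (n + 1)) (Fin (n + 1)) ℝ) with hQ
  set BB := Matrix.fromBlocks (0 : Matrix (Fin n ⊕ Fin (n+1)) (Fin n ⊕ Fin (n+1)) ℝ) Q (-Qᵀ) 0
    with hBB
  have key : Matrix.diagonal d * marxA0 n (sl^2) (sc^2) (fun i => a i ^ 2)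
      = (ω₀ • BB) * Matrix.diagonal d := by
    ext x y
    rw [Matrix.diagonal_mul, Matrix.mul_diagonal, Matrix.smul_apply, smul_eq_mul]
    rcases x with (i | j) | j <;> rcases y with (i' | j') | j'
    · simp [marxA0, hBB]
    · simp [marxA0, hBB]
    · -- capacitor-voltage row, current column (main M block)
      simp only [marxA0, hBB, hQ, hM, hJinv, Matrix.fromBlocks_apply₁₂,
        Matrix.fromRows_apply_inl, Matrix.smul_apply, marxJm, marxSigma,
        Matrix.mul_diagonal, Matrix.diagonal_mul, Matrix.of_apply, hddef,
        Sum.elim_inl, Sum.elim_inr, smul_eq_mul, hq, hsa, hsai, hw, hgj]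
      rw [Real.sqrt_inv]
      have hai := (ha i).ne'
      have hsg : Real.sqrt (g j') ≠ 0 := (Real.sqrt_pos.mpr (hgpos j')).ne'
      field_simp
    · simp [marxA0, hBB]
    · simp [marxA0, hBB]
    · -- capacitor-voltage of node row, current column (identity block)
      simp only [marxA0, hBB, hQ, Matrix.fromBlocks_apply₁₂, Matrix.fromRows_apply_inr,
        Matrix.smul_apply, hddef, Sum.elim_inl, Sum.elim_inr, smul_eq_mul, hq, hw]
      by_cases h : j = j'
      · subst h
        simp only [Matrix.one_apply_eq]
        field_simp
      · simp [Matrix.one_apply_ne h]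
    · -- current row, capacitor-voltage column
      simp only [marxA0, hBB, hQ, hM, hJinv, Matrix.fromBlocks_apply₂₁,
        Matrix.fromCols_apply_inl, Matrix.smul_apply, Matrix.neg_apply,
        Matrix.transpose_apply, Matrix.fromRows_apply_inl, marxJm, marxSigma,
        Matrix.diagonal_mul_diagonal, Matrix.mul_diagonal, Matrix.diagonal_mul,
        Matrix.of_apply, hddef,
        Sum.elim_inl, Sum.elim_inr, smul_eq_mul, hq, hsa, hsai, hw, hgj]
      rw [Real.sqrt_inv]
      have hai := (ha i').ne'
      obtain ⟨G, hG, hGj⟩ : ∃ G : ℝ, 0 < G ∧ g j = G ^ 2 :=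
        ⟨Real.sqrt (g j), Real.sqrt_pos.mpr (hgpos j), (Real.sq_sqrt (hgpos j).le).symm⟩
      rw [hGj, Real.sqrt_sq hG.le]
      have hG0 : G ≠ 0 := hG.ne'
      split_ifs <;> field_simp <;> try ring
    · -- current row, node-voltage column (identity block)
      simp only [marxA0, hBB, hQ, Matrix.fromBlocks_apply₂₁, Matrix.fromCols_apply_inr,
        Matrix.smul_apply, Matrix.neg_apply, Matrix.transpose_apply,
        Matrix.fromRows_apply_inr, hddef, Sum.elim_inl, Sum.elim_inr, smul_eq_mul, hq, hw]
      by_cases h : j = j'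
      · subst h
        simp only [Matrix.one_apply_eq]
        field_simp
      · simp [Matrix.one_apply_ne h, Matrix.one_apply_ne (Ne.symm h)]
    · simp [marxA0, hBB]
  have h1 : T₀ * marxA0 n (sl^2) (sc^2) (fun i => a i ^ 2) * T₀⁻¹ = ω₀ • BB := by
    have h : T₀ * marxA0 n (sl^2) (sc^2) (fun i => a i ^ 2) = (ω₀ • BB) * T₀ := by
      rw [hTd]; exact key
    rw [h, mul_assoc, hTinv1, mul_one]
  have h2 : (T₀ * marxA0 n (sl^2) (sc^2) (fun i => a i ^ 2) * T₀⁻¹)ᵀ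
      = -(T₀ * marxA0 n (sl^2) (sc^2) (fun i => a i ^ 2) * T₀⁻¹) := by
    rw [h1, hBB, Matrix.transpose_smul, Matrix.fromBlocks_transpose]
    rw [← smul_neg, Matrix.fromBlocks_neg, neg_neg, neg_zero]
    simp
  refine ⟨h1, h2, fun μ hroot => ?_⟩
  have hcp : (T₀ * marxA0 n (sl^2) (sc^2) (fun i => a i ^ 2) * T₀⁻¹).charpoly
      = (marxA0 n (sl^2) (sc^2) (fun i => a i ^ 2)).charpoly :=
    charpoly_conj' T₀ _ T₀⁻¹ hTinv1 hTinv2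
  exact skew_root_re_eq_zero' _ h2 μ (by rw [hcp]; exact hroot)


end
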